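/- For waning functions f and g, the topology T_f is contained in T_g if and only if g(n) ≤ f(n) for all n ∈ ω. In particular, T_f = T_g if and only if f = g. -/

import Mathlib

open Set Classical

noncomputable section

/-- A partial injection (partial bijection) on ℕ, viewed as a set of pairs. -/
def IsPInj (g : Set (ℕ × ℕ)) : Prop :=
  ∀ ⦃a b c d : ℕ⦄, (a, b) ∈ g → (c, d) ∈ g → (a = c ↔ b = d)

/-- Domain of a partial injection. -/
def pdom (g : Set (ℕ × ℕ)) : Set ℕ := {x | ∃ y, (x, y) ∈ g}

/-- Image of a partial injection. -/
def pim (g : Set (ℕ × ℕ)) : Set ℕ := {y | ∃ x, (x, y) ∈ g}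

/-- Restriction of a partial injection to `{0, …, r-1}`. -/
def pres (g : Set (ℕ × ℕ)) (r : ℕ) : Set (ℕ × ℕ) := {p ∈ g | p.1 < r}

/-- A waning function `f : ω + 1 → ω + 1`. -/
def Waning (f : ℕ∞ → ℕ∞) : Prop :=
  Antitone f ∧
    ((∀ i, f i = ⊤) ∨
      ((∃ i : ℕ, f i ≠ ⊤) ∧
        ∀ j : ℕ, f j ≠ 0 → f j ≠ ⊤ → f ((j + 1 : ℕ)) < f j))

/-- The symmetric inverse monoid `I_ℕ` as a type: partial bijections on `ℕ`. -/
def PB : Type := {g : Set (ℕ × ℕ) // IsPInj g}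

/-- `U_{x,y} = {h : (x,y) ∈ h}`. -/
def Uxy (x y : ℕ) : Set PB := {h | (x, y) ∈ h.1}

/-- `W_x = {h : x ∉ dom h}`. -/
def Wlow (x : ℕ) : Set PB := {h | x ∉ pdom h.1}

/-- The subbasis for the topology `I₂`. -/
def I2sub : Set (Set PB) := {S | ∃ x y, S = Uxy x y} ∪ {S | ∃ x, S = Wlow x}

/-- The topology `I₂` on `I_ℕ`. -/
def I2 : TopologicalSpace PB := .generateFrom I2sub

/-- `U_{f,n,X} = {g : |im(g) \ X| ≥ n and |X ∩ im(g)| ≤ f(n)}`. -/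
def UfnX (f : ℕ∞ → ℕ∞) (n : ℕ) (X : Finset ℕ) : Set PB :=
  {g | (n : ℕ∞) ≤ (pim g.1 \ ↑X).encard ∧ ((↑X : Set ℕ) ∩ pim g.1).encard ≤ f n}

/-- The topology `T_f`: the least topology containing `I₂` and all the sets `U_{f,n,X}`. -/
def Tw (f : ℕ∞ → ℕ∞) : TopologicalSpace PB :=
  .generateFrom (I2sub ∪ {S | ∃ n X, S = UfnX f n X})

-- key arithmetic lemma for waning functions
lemma wan_key {f : ℕ∞ → ℕ∞} (hf : Waning f) (m k : ℕ) (hm : f m ≠ ⊤)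
    (hk : f ((m + k : ℕ) : ℕ∞) ≠ 0) : (k : ℕ∞) + f ((m + k : ℕ) : ℕ∞) ≤ f m := by
  induction k with
  | zero => simp
  | succ k ih =>
    have hmono : f ((m + (k+1) : ℕ) : ℕ∞) ≤ f ((m + k : ℕ) : ℕ∞) :=
      hf.1 (by exact_mod_cast Nat.le_succ (m + k))
    have h0 : f ((m + k : ℕ) : ℕ∞) ≠ 0 := by
      intro h; exact hk (le_antisymm (h ▸ hmono) (zero_le))
    have hmt : f ((m + k : ℕ) : ℕ∞) ≠ ⊤ := by
      intro h
      exact hm (top_le_iff.mp (h ▸ hf.1 (show ((m:ℕ):ℕ∞) ≤ ((m + k : ℕ) : ℕ∞) by exact_mod_cast Nat.le_add_right m k)))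
    have hstep : f ((m + k + 1 : ℕ) : ℕ∞) < f ((m + k : ℕ) : ℕ∞) := by
      rcases hf.2 with h | ⟨_, h⟩
      · exact absurd (h m) hm
      · exact h (m + k) h0 hmt
    have hle : f ((m + (k+1) : ℕ) : ℕ∞) + 1 ≤ f ((m + k : ℕ) : ℕ∞) := by
      rw [ENat.add_one_le_iff (ne_top_of_lt (show f ((m + (k+1) : ℕ) : ℕ∞) < f ((m+k:ℕ):ℕ∞) by
        exact_mod_cast hstep))]
      exact_mod_cast hstep
    calc ((k+1 : ℕ) : ℕ∞) + f ((m + (k+1) : ℕ) : ℕ∞)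
        = (k : ℕ∞) + (f ((m + (k+1) : ℕ) : ℕ∞) + 1) := by push_cast; ring
      _ ≤ (k : ℕ∞) + f ((m + k : ℕ) : ℕ∞) := by exact add_le_add (le_refl _) hle
      _ ≤ f m := ih h0

lemma wan_top {f : ℕ∞ → ℕ∞} (hf : Waning f) : (∀ i, f i = ⊤) ∨ ∃ m : ℕ, f (m : ℕ∞) = 0 := by
  rcases hf.2 with h | ⟨⟨i, hi⟩, _⟩
  · exact Or.inl h
  · right
    set k := (f i).toNat with hkdef
    have hik : ((k:ℕ∞)) = f i := ENat.coe_toNat hi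
    refine ⟨i + k, by_contra fun hne => ?_⟩
    have := wan_key hf i k hi hne
    rw [hik] at this
    have h2 : f ((i + k : ℕ) : ℕ∞) ≤ 0 := by
      have := (WithTop.add_le_add_iff_left (show f i ≠ ⊤ from hi)
        (y := f ((i + k : ℕ) : ℕ∞)) (z := 0)).mp (by exact this.trans_eq (add_zero (f i)).symm)
      exact this
    exact hne (le_antisymm h2 (zero_le))

lemma Wlow_inj : Function.Injective Wlow := by
  intro a b hab
  by_contra hne
  have pa : IsPInj {((a, a) : ℕ × ℕ)} := by
    rintro x y z w hx hz
    simp only [Set.mem_singleton_iff, Prod.mk.injEq] at hx hz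
    obtain ⟨rfl, rfl⟩ := hx; obtain ⟨rfl, rfl⟩ := hz
    exact Iff.rfl
  have h1 : (⟨{(a,a)}, pa⟩ : PB) ∈ Wlow b := by
    simp only [Wlow, pdom, Set.mem_setOf_eq, Set.mem_singleton_iff, Prod.mk.injEq]
    rintro ⟨y, rfl, rfl⟩
    exact hne rfl
  rw [← hab] at h1
  exact h1 ⟨a, rfl⟩

lemma generateOpen_exists_finset {α : Type*} {S : Set (Set α)} {U : Set α}
    (hU : TopologicalSpace.GenerateOpen S U) :
    ∀ x ∈ U, ∃ T : Finset (Set α), ↑T ⊆ S ∧ x ∈ ⋂₀ (↑T : Set (Set α)) ∧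
      ⋂₀ (↑T : Set (Set α)) ⊆ U := by
  induction hU with
  | basic s hs =>
    intro x hx
    exact ⟨{s}, by simpa, by simpa, by simp⟩
  | univ =>
    intro x _
    exact ⟨∅, by simp, by simp, by simp⟩
  | inter u v _ _ ihu ihv =>
    intro x hx
    obtain ⟨T1, hT1, hx1, hs1⟩ := ihu x hx.1
    obtain ⟨T2, hT2, hx2, hs2⟩ := ihv x hx.2
    refine ⟨T1 ∪ T2, ?_, ?_, ?_⟩
    · rw [Finset.coe_union]; exact Set.union_subset hT1 hT2
    · rw [Finset.coe_union, Set.sInter_union]; exact ⟨hx1, hx2⟩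
    · rw [Finset.coe_union, Set.sInter_union]
      exact fun y hy => ⟨hs1 hy.1, hs2 hy.2⟩
  | sUnion 𝒮 _ ih =>
    intro x hx
    obtain ⟨s, hs, hxs⟩ := hx
    obtain ⟨T, a, b, c⟩ := ih s hs x hxs
    exact ⟨T, a, b, c.trans (Set.subset_sUnion_of_mem hs)⟩

lemma isOpen_Tw {f : ℕ∞ → ℕ∞} {s : Set PB}
    (hs : s ∈ I2sub ∪ {S | ∃ n X, S = UfnX f n X}) : @IsOpen PB (Tw f) s := by
  unfold Tw
  exact .basic s hs


lemma Tw_le_of_le {f g : ℕ∞ → ℕ∞} (hg : Waning g) (hle : ∀ n : ℕ, g n ≤ f n) :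
    ∀ U : Set PB, @IsOpen PB (Tw f) U → @IsOpen PB (Tw g) U := by
  have hTle : Tw g ≤ Tw f := by
    apply le_generateFrom
    rintro s (hs | ⟨n, X, rfl⟩)
    · exact isOpen_Tw (Or.inl hs)
    -- show UfnX f n X is open in Tw g
    letI : TopologicalSpace PB := Tw g
    rw [isOpen_iff_forall_mem_open]
    rintro h ⟨h1, h2⟩
    -- K = X ∩ im h, finite of size k
    set K : Set ℕ := (↑X : Set ℕ) ∩ pim h.1 with hKdef
    have hKfin : K.Finite := (X.finite_toSet).inter_of_left _
    set k := hKfin.toFinset.card with hkdef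
    have hk : K.encard = (k : ℕ∞) := hKfin.encard_eq_coe_toFinset_card
    -- P ⊆ im h \ X of size n
    obtain ⟨P, hPsub, hPcard⟩ := Set.exists_subset_encard_eq h1
    have hPfin : P.Finite := Set.finite_of_encard_eq_coe hPcard
    -- Z = X \ im h
    set Z : Finset ℕ := X.filter (fun x => x ∉ pim h.1) with hZdef
    have hZim : (↑Z : Set ℕ) ∩ pim h.1 = ∅ := by
      ext x; simp only [hZdef, Finset.coe_filter, Set.mem_inter_iff, Set.mem_setOf_eq,
        Set.mem_empty_iff_false, iff_false]
      rintro ⟨⟨-, hx⟩, hx'⟩; exact hx hx'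
    have hZX : (↑Z : Set ℕ) ⊆ (↑X : Set ℕ) := by
      intro x hx; simp only [hZdef, Finset.coe_filter, Set.mem_setOf_eq] at hx; exact hx.1
    -- the finitely many pairs to pin
    set S : Set (ℕ × ℕ) := {p | p ∈ h.1 ∧ p.2 ∈ P ∪ K} with hSdef
    have hSfin : S.Finite := by
      have hsub : S ⊆ ⋃ y ∈ P ∪ K, {p : ℕ × ℕ | p ∈ h.1 ∧ p.2 = y} := by
        rintro p ⟨hp, hy⟩
        exact Set.mem_biUnion hy ⟨hp, rfl⟩
      refine Set.Finite.subset (Set.Finite.biUnion (hPfin.union hKfin) fun y _ => ?_) hsub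
      apply Set.Subsingleton.finite
      rintro ⟨a, b⟩ ⟨hab, hb⟩ ⟨c, d⟩ ⟨hcd, hd⟩
      simp only at hb hd
      subst hb; subst hd
      have := (h.2 hab hcd).mpr rfl
      simp [this]
    refine ⟨(⋂ p ∈ S, Uxy p.1 p.2) ∩ UfnX g (n + k) Z, ?_, ?_, ?_, ?_⟩
    · -- the neighborhood is contained in UfnX f n X
      rintro h' ⟨hpins, hg1, hg2⟩
      simp only [Set.mem_iInter] at hpins
      have hpins' : ∀ p ∈ S, p ∈ h'.1 := fun p hp => hpins p hp
      have hPim : P ⊆ pim h'.1 \ ↑X := by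
        intro y hy
        have hy2 : y ∈ pim h.1 \ ↑X := hPsub hy
        obtain ⟨x, hxy⟩ := hy2.1
        refine ⟨⟨x, hpins' (x, y) ⟨hxy, Or.inl hy⟩⟩, hy2.2⟩
      constructor
      · calc (n : ℕ∞) = P.encard := hPcard.symm
          _ ≤ (pim h'.1 \ ↑X).encard := Set.encard_mono hPim
      · -- X ∩ im h' ⊆ K ∪ (Z ∩ im h')
        have hsub2 : (↑X : Set ℕ) ∩ pim h'.1 ⊆ K ∪ ((↑Z : Set ℕ) ∩ pim h'.1) := by
          rintro x ⟨hxX, hxim⟩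
          by_cases hx : x ∈ pim h.1
          · exact Or.inl ⟨hxX, hx⟩
          · refine Or.inr ⟨?_, hxim⟩
            simp only [hZdef, Finset.coe_filter, Set.mem_setOf_eq]
            exact ⟨hxX, hx⟩
        have hbound : ((↑X : Set ℕ) ∩ pim h'.1).encard ≤ (k : ℕ∞) + g ((n + k : ℕ) : ℕ∞) := by
          calc ((↑X : Set ℕ) ∩ pim h'.1).encard ≤ (K ∪ ((↑Z : Set ℕ) ∩ pim h'.1)).encard :=
                Set.encard_mono hsub2
            _ ≤ K.encard + ((↑Z : Set ℕ) ∩ pim h'.1).encard := Set.encard_union_le _ _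
            _ ≤ (k : ℕ∞) + g ((n + k : ℕ) : ℕ∞) := by rw [hk]; exact add_le_add (le_refl _) hg2
        refine hbound.trans ?_
        by_cases hfn : f n = ⊤
        · rw [hfn]; exact le_top
        · have hgn : g n ≠ ⊤ := fun hh => hfn (top_le_iff.mp (hh ▸ hle n))
          by_cases hz : g ((n + k : ℕ) : ℕ∞) = 0
          · rw [hz, add_zero]
            calc (k : ℕ∞) = K.encard := hk.symm
              _ ≤ f n := h2
          · exact (wan_key hg n k hgn hz).trans (hle n)
    · -- openness
      apply IsOpen.inter
      · exact Set.Finite.isOpen_biInter hSfin fun p _ =>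
          isOpen_Tw (Or.inl (Or.inl ⟨p.1, p.2, rfl⟩))
      · exact isOpen_Tw (Or.inr ⟨n + k, Z, rfl⟩)
    · -- h is in the neighborhood
      exact Set.mem_iInter.mpr fun p => Set.mem_iInter.mpr fun hp => hp.1
    · constructor
      · have hsub3 : P ∪ K ⊆ pim h.1 \ ↑Z := by
          rintro y (hy | hy)
          · exact ⟨(hPsub hy).1, fun hz => (hPsub hy).2 (hZX hz)⟩
          · exact ⟨hy.2, fun hz => (Set.eq_empty_iff_forall_notMem.mp hZim y) ⟨hz, hy.2⟩⟩
        have hdisj : Disjoint P K := by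
          rw [Set.disjoint_left]
          exact fun y hy hyK => (hPsub hy).2 hyK.1
        calc ((n + k : ℕ) : ℕ∞) = (n : ℕ∞) + (k : ℕ∞) := by push_cast; ring
          _ = P.encard + K.encard := by rw [hPcard, hk]
          _ = (P ∪ K).encard := (Set.encard_union_eq hdisj).symm
          _ ≤ (pim h.1 \ ↑Z).encard := Set.encard_mono hsub3
      · rw [hZim, Set.encard_empty]; exact zero_le
  exact fun U hU => (TopologicalSpace.le_def.mp hTle) U hU


lemma le_of_Tw_le {f g : ℕ∞ → ℕ∞} (hg : Waning g)
    (hsub : ∀ U : Set PB, @IsOpen PB (Tw f) U → @IsOpen PB (Tw g) U) (n : ℕ) :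
    g (n : ℕ∞) ≤ f (n : ℕ∞) := by
  by_contra hcon
  push_neg at hcon
  have hfn : f (n : ℕ∞) ≠ ⊤ := hcon.ne_top
  set F := (f (n : ℕ∞)).toNat with hFdef
  have hFc : (F : ℕ∞) = f (n : ℕ∞) := ENat.coe_toNat hfn
  set X : Finset ℕ := Finset.range (F + 1) with hXdef
  set Bf : Finset ℕ := Finset.Ico (F + 1) (F + 1 + n) with hBdef
  set Bs : Set ℕ := ↑Bf with hBsdef
  have hBmem : ∀ x, x ∈ Bs ↔ F + 1 ≤ x ∧ x < F + 1 + n := by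
    intro x; simp [hBsdef, hBdef]
  have hXmem : ∀ x, x ∈ (↑X : Set ℕ) ↔ x < F + 1 := by
    intro x; simp [hXdef]
  have hBcard : Bs.encard = (n : ℕ∞) := by
    rw [hBsdef, Set.encard_coe_eq_coe_finsetCard, hBdef, Nat.card_Ico]
    congr 1; omega
  -- the diagonal partial bijection on Bs
  have hpinj0 : IsPInj {p : ℕ × ℕ | p.1 ∈ Bs ∧ p.2 = p.1} := by
    rintro a b c d ⟨ha, hb⟩ ⟨hc, hd⟩
    simp only at hb hd; subst hb; subst hd; exact Iff.rfl
  set h0 : PB := ⟨{p : ℕ × ℕ | p.1 ∈ Bs ∧ p.2 = p.1}, hpinj0⟩ with hh0def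
  have hD0 : ∀ x y : ℕ, ((x, y) ∈ h0.1) ↔ (x ∈ Bs ∧ y = x) := fun _ _ => Iff.rfl
  have hpim0 : pim h0.1 = Bs := by
    ext y
    constructor
    · rintro ⟨x, hx⟩
      rw [hD0] at hx
      rw [hx.2]; exact hx.1
    · intro hy; exact ⟨y, (hD0 y y).mpr ⟨hy, rfl⟩⟩
  have hpdom0 : pdom h0.1 = Bs := by
    ext x
    constructor
    · rintro ⟨y, hx⟩
      exact ((hD0 x y).mp hx).1
    · intro hx; exact ⟨x, (hD0 x x).mpr ⟨hx, rfl⟩⟩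
  have hBXdisj : ∀ x, x ∈ Bs → x ∉ (↑X : Set ℕ) := by
    intro x hx hx'
    rw [hBmem] at hx; rw [hXmem] at hx'; omega
  have hh0U : h0 ∈ UfnX f n X := by
    constructor
    · rw [hpim0]
      have : Bs \ ↑X = Bs := by
        ext x
        simp only [Set.mem_diff, and_iff_left_iff_imp]
        exact fun hx => hBXdisj x hx
      rw [this, hBcard]
    · rw [hpim0]
      have : (↑X : Set ℕ) ∩ Bs = ∅ := by
        ext x
        simp only [Set.mem_inter_iff, Set.mem_empty_iff_false, iff_false]
        rintro ⟨hx1, hx2⟩; exact hBXdisj x hx2 hx1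
      rw [this, Set.encard_empty]; exact zero_le
  -- UfnX f n X is open in Tw g
  have hopen : @IsOpen PB (Tw g) (UfnX f n X) := hsub _ (isOpen_Tw (Or.inr ⟨n, X, rfl⟩))
  have hgen : TopologicalSpace.GenerateOpen (I2sub ∪ {S | ∃ m Y, S = UfnX g m Y}) (UfnX f n X) := by
    unfold Tw at hopen; exact hopen
  obtain ⟨T, hTsub, hmem, hTU⟩ := generateOpen_exists_finset hgen h0 hh0U
  -- bound for the W-indices appearing in T
  have hZTfin : {z : ℕ | Wlow z ∈ (↑T : Set (Set PB))}.Finite := by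
    have : {z : ℕ | Wlow z ∈ (↑T : Set (Set PB))} = Wlow ⁻¹' ↑T := rfl
    rw [this]
    exact Set.Finite.preimage (Wlow_inj.injOn) T.finite_toSet
  obtain ⟨m0, hm0⟩ := hZTfin.bddAbove
  set M : ℕ := max (F + 1 + n) (m0 + 1) with hMdef
  have hMge : F + 1 + n ≤ M := le_max_left _ _
  have hMz : ∀ z, Wlow z ∈ (↑T : Set (Set PB)) → z < M := by
    intro z hz
    have := hm0 hz
    have : z ≤ m0 := this
    calc z ≤ m0 := this
      _ < m0 + 1 := Nat.lt_succ_self _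
      _ ≤ M := le_max_right _ _
  -- the extended partial bijection
  have hpinj1 : IsPInj {p : ℕ × ℕ | (p.1 ∈ Bs ∧ p.2 = p.1) ∨ (p.2 ∈ (↑X : Set ℕ) ∧ p.1 = p.2 + M)} := by
    rintro a b c d (⟨ha, hb⟩ | ⟨ha, hb⟩) (⟨hc, hd⟩ | ⟨hc, hd⟩) <;>
      simp only at hb hd <;>
      [skip; skip; skip; skip]
    · subst hb; subst hd; exact Iff.rfl
    · -- a ∈ Bs, b = a; d ∈ X, c = d + M
      rw [hBmem] at ha; rw [hXmem] at hc
      subst hb; subst hd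
      constructor <;> intro hh <;> omega
    · rw [hXmem] at ha; rw [hBmem] at hc
      subst hb; subst hd
      constructor <;> intro hh <;> omega
    · rw [hXmem] at ha; rw [hXmem] at hc
      subst hb; subst hd
      constructor <;> intro hh <;> omega
  set h1 : PB := ⟨_, hpinj1⟩ with hh1def
  have hD1 : ∀ x y : ℕ, ((x, y) ∈ h1.1) ↔ ((x ∈ Bs ∧ y = x) ∨ (y ∈ (↑X : Set ℕ) ∧ x = y + M)) :=
    fun _ _ => Iff.rfl
  have hpim1 : pim h1.1 = Bs ∪ ↑X := by
    ext y
    constructor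
    · rintro ⟨x, hx⟩
      rcases (hD1 x y).mp hx with ⟨hx1, hx2⟩ | ⟨hy, -⟩
      · rw [hx2]; exact Or.inl hx1
      · exact Or.inr hy
    · rintro (hy | hy)
      · exact ⟨y, (hD1 y y).mpr (Or.inl ⟨hy, rfl⟩)⟩
      · exact ⟨y + M, (hD1 (y + M) y).mpr (Or.inr ⟨hy, rfl⟩)⟩
  -- h1 belongs to every element of T
  have hh1T : h1 ∈ ⋂₀ (↑T : Set (Set PB)) := by
    intro s hsT
    have hmem_s : h0 ∈ s := hmem s hsT
    rcases hTsub hsT with (⟨x, y, rfl⟩ | ⟨z, rfl⟩) | ⟨m, Y, rfl⟩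
    · -- Uxy
      exact Or.inl hmem_s
    · -- Wlow z
      intro hzdom
      obtain ⟨w, hw⟩ := hzdom
      rcases hw with ⟨hz, -⟩ | ⟨hwX, hz⟩
      · exact hmem_s (hpdom0 ▸ (by exact ⟨z, hz, rfl⟩ : z ∈ pdom h0.1))
      · have hzM := hMz z hsT
        omega
    · -- UfnX g m Y
      obtain ⟨hm1, hm2⟩ := hmem_s
      rw [hpim0] at hm1 hm2
      constructor
      · rw [hpim1]
        refine hm1.trans (Set.encard_mono ?_)
        exact Set.diff_subset_diff_left Set.subset_union_left
      · rw [hpim1]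
        have hsplit : (↑Y : Set ℕ) ∩ (Bs ∪ ↑X) ⊆ ((↑Y : Set ℕ) ∩ Bs) ∪ (↑X : Set ℕ) := by
          rintro x ⟨hxY, hx | hx⟩
          · exact Or.inl ⟨hxY, hx⟩
          · exact Or.inr hx
        have hXcard : ((↑X : Set ℕ)).encard = ((F + 1 : ℕ) : ℕ∞) := by
          rw [hXdef, Set.encard_coe_eq_coe_finsetCard, Finset.card_range]
        have hbound : ((↑Y : Set ℕ) ∩ (Bs ∪ ↑X)).encard ≤
            ((↑Y : Set ℕ) ∩ Bs).encard + ((F + 1 : ℕ) : ℕ∞) := by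
          calc ((↑Y : Set ℕ) ∩ (Bs ∪ ↑X)).encard
              ≤ (((↑Y : Set ℕ) ∩ Bs) ∪ (↑X : Set ℕ)).encard := Set.encard_mono hsplit
            _ ≤ ((↑Y : Set ℕ) ∩ Bs).encard + ((↑X : Set ℕ)).encard := Set.encard_union_le _ _
            _ = ((↑Y : Set ℕ) ∩ Bs).encard + ((F + 1 : ℕ) : ℕ∞) := by rw [hXcard]
      -- now bound (Y ∩ Bs).encard + (F+1) ≤ g m
        refine hbound.trans ?_
        by_cases hgm : g (m : ℕ∞) = ⊤
        · rw [hgm]; exact le_top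
        -- m ≤ n
        have hBsY : (Bs \ ↑Y).encard ≤ (n : ℕ∞) := hBcard ▸ Set.encard_mono Set.diff_subset
        have hmn : m ≤ n := by exact_mod_cast hm1.trans hBsY
        have hgn0 : g (n : ℕ∞) ≠ 0 := by
          intro hh
          rw [hh] at hcon
          exact absurd hcon (by simp)
        have hkey : ((n - m : ℕ) : ℕ∞) + g (n : ℕ∞) ≤ g (m : ℕ∞) := by
          have := wan_key hg m (n - m) hgm (by rw [Nat.add_sub_cancel' hmn]; exact hgn0)
          rwa [Nat.add_sub_cancel' hmn] at this
        have hFgn : ((F + 1 : ℕ) : ℕ∞) ≤ g (n : ℕ∞) := by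
          push_cast
          rw [ENat.add_one_le_iff (by rw [hFc]; exact hfn), hFc]
          exact hcon
        have hYBs : ((↑Y : Set ℕ) ∩ Bs).encard ≤ ((n - m : ℕ) : ℕ∞) := by
          have hpart : ((↑Y : Set ℕ) ∩ Bs).encard + (Bs \ ↑Y).encard = (n : ℕ∞) := by
            rw [← hBcard, ← Set.encard_union_eq]
            · congr 1
              rw [Set.inter_comm]
              exact Set.inter_union_diff Bs ↑Y
            · exact Set.disjoint_of_subset_left Set.inter_subset_left disjoint_sdiff_right
          have h2 : ((↑Y : Set ℕ) ∩ Bs).encard + (m : ℕ∞) ≤ ((n - m : ℕ) : ℕ∞) + (m : ℕ∞) := by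
            calc ((↑Y : Set ℕ) ∩ Bs).encard + (m : ℕ∞)
                ≤ ((↑Y : Set ℕ) ∩ Bs).encard + (Bs \ ↑Y).encard := add_le_add (le_refl _) hm1
              _ = (n : ℕ∞) := hpart
              _ = ((n - m : ℕ) : ℕ∞) + (m : ℕ∞) := by
                  rw [← Nat.cast_add]; congr 1; omega
          exact (WithTop.add_le_add_iff_right (by simp : (m : ℕ∞) ≠ ⊤)).mp h2
        calc ((↑Y : Set ℕ) ∩ Bs).encard + ((F + 1 : ℕ) : ℕ∞)
            ≤ ((n - m : ℕ) : ℕ∞) + g (n : ℕ∞) := add_le_add hYBs hFgn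
          _ ≤ g (m : ℕ∞) := hkey
  -- h1 ∈ UfnX f n X, contradiction
  have hh1U := hTU hh1T
  have hfinal : ((↑X : Set ℕ) ∩ pim h1.1).encard = ((F + 1 : ℕ) : ℕ∞) := by
    rw [hpim1]
    have : (↑X : Set ℕ) ∩ (Bs ∪ ↑X) = ↑X := by
      apply Set.inter_eq_self_of_subset_left Set.subset_union_right
    rw [this, Set.encard_coe_eq_coe_finsetCard, hXdef, Finset.card_range]
  have := hh1U.2
  rw [hfinal, ← hFc] at this
  have : F + 1 ≤ F := by exact_mod_cast this
  omega


/-- For waning functions `f` and `g`, `T_f ⊆ T_g` iff `g(n) ≤ f(n)` for all `n ∈ ω`;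
in particular `T_f = T_g` iff `f = g`. -/
theorem Tw_subset_iff (f g : ℕ∞ → ℕ∞) (hf : Waning f) (hg : Waning g) :
    ((∀ U : Set PB, @IsOpen PB (Tw f) U → @IsOpen PB (Tw g) U) ↔ ∀ n : ℕ, g n ≤ f n) ∧
    (Tw f = Tw g ↔ f = g) := by
  constructor
  · exact ⟨fun hsub n => le_of_Tw_le hg hsub n, fun hle => Tw_le_of_le hg hle⟩
  · constructor
    · intro heq
      have h1 : ∀ n : ℕ, g (n : ℕ∞) ≤ f (n : ℕ∞) :=
        le_of_Tw_le hg (fun U hU => heq ▸ hU)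
      have h2 : ∀ n : ℕ, f (n : ℕ∞) ≤ g (n : ℕ∞) :=
        le_of_Tw_le hf (fun U hU => heq.symm ▸ hU)
      have hn : ∀ n : ℕ, f (n : ℕ∞) = g (n : ℕ∞) := fun n => le_antisymm (h2 n) (h1 n)
      funext a
      induction a using ENat.recTopCoe with
      | top =>
        rcases wan_top hf with hft | ⟨m, hm⟩
        · rcases wan_top hg with hgt | ⟨m, hm⟩
          · rw [hft ⊤, hgt ⊤]
          · exact absurd ((hn m).symm.trans (hft m)) (by rw [hm]; simp)
        · rcases wan_top hg with hgt | ⟨m', hm'⟩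
          · exact absurd ((hn m).trans (hgt m)) (by rw [hm]; simp)
          · have hft : f ⊤ = 0 :=
              le_antisymm (by rw [← hm]; exact hf.1 le_top) (zero_le)
            have hgt : g ⊤ = 0 :=
              le_antisymm (by rw [← hm']; exact hg.1 le_top) (zero_le)
            rw [hft, hgt]
      | coe n => exact hn n
    · rintro rfl; rfl

end
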